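/- Let A be a self-adjoint operator with domain D(A) on a Hilbert space H and let U be a unitary operator on H of class C¹(A) with commutator ad_A U. Then for every n ∈ ℤ the vector U^n ψ belongs to D(A) whenever ψ ∈ D(A), and for every (φ, ψ) ∈ H × D(A): limsup_{n→∞} n^{−1}·|⟨U^n φ, A(U^n ψ)⟩| ≤ ‖ad_A U‖·‖φ‖·‖ψ‖ and limsup_{n→∞} n^{−1}·|⟨U^{*n} φ, A(U^{*n} ψ)⟩| ≤ ‖ad_A U‖·‖φ‖·‖ψ‖. -/

import Mathlib

open scoped ComplexInnerProductSpace

section Stmt8Aux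

variable {H : Type*} [NormedAddCommGroup H] [InnerProductSpace ℂ H] [CompleteSpace H]

/-- Step lemma: if `V` satisfies the `C¹` commutator identity with commutator `B`,
then `V` maps the domain into itself and `A (V ψ) = V (A ψ) + B ψ`. -/
lemma stmt8_step (A : H →ₗ.[ℂ] H) (hdense : Dense (A.domain : Set H)) (hsa : A.adjoint = A)
    (V B : H →L[ℂ] H)
    (hcomm : ∀ φ ψ : A.domain,
      ⟪A φ, V (ψ : H)⟫ - ⟪(φ : H), V (A ψ)⟫ = ⟪(φ : H), B (ψ : H)⟫)
    (ψ : A.domain) :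
    ∃ h : V (ψ : H) ∈ A.domain, A ⟨V (ψ : H), h⟩ = V (A ψ) + B (ψ : H) := by
  have key : ∀ x : A.domain, ⟪V (A ψ) + B (ψ : H), (x : H)⟫ = ⟪V (ψ : H), A x⟫ := by
    intro x
    have h1 := hcomm x ψ
    have h2 : ⟪A x, V (ψ : H)⟫ = ⟪(x : H), V (A ψ)⟫ + ⟪(x : H), B (ψ : H)⟫ := by
      linear_combination h1
    calc ⟪V (A ψ) + B (ψ : H), (x : H)⟫
        = starRingEnd ℂ (⟪(x : H), V (A ψ)⟫ + ⟪(x : H), B (ψ : H)⟫) := by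
          rw [map_add, inner_conj_symm, inner_conj_symm, inner_add_left]
      _ = starRingEnd ℂ ⟪A x, V (ψ : H)⟫ := by rw [h2]
      _ = ⟪V (ψ : H), A x⟫ := by rw [inner_conj_symm]
  have hmem' : V (ψ : H) ∈ A.adjoint.domain :=
    LinearPMap.mem_adjoint_domain_of_exists _ ⟨V (A ψ) + B (ψ : H), key⟩
  have hmem : V (ψ : H) ∈ A.domain := by rwa [hsa] at hmem'
  refine ⟨hmem, ?_⟩
  have hFA : A.IsFormalAdjoint A := by
    have := LinearPMap.adjoint_isFormalAdjoint hdense (T := A)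
    rwa [hsa] at this
  refine hdense.eq_of_inner_left ℂ fun x' hx' => ?_
  obtain ⟨x, rfl⟩ : ∃ x : A.domain, (x : H) = x' := ⟨⟨x', hx'⟩, rfl⟩
  calc ⟪A ⟨V (ψ : H), hmem⟩, (x : H)⟫ = ⟪V (ψ : H), A x⟫ := hFA ⟨V (ψ : H), hmem⟩ x
    _ = ⟪V (A ψ) + B (ψ : H), (x : H)⟫ := (key x).symm

lemma stmt8_pow_norm (V : H →L[ℂ] H) (hV : ∀ x : H, ‖V x‖ = ‖x‖) :
    ∀ (n : ℕ) (x : H), ‖(V ^ n) x‖ = ‖x‖ := by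
  intro n
  induction n with
  | zero => intro x; simp
  | succ n ih => intro x; rw [pow_succ', ContinuousLinearMap.mul_apply, hV, ih]

/-- Iterated step lemma with norm bound. -/
lemma stmt8_pow (A : H →ₗ.[ℂ] H) (hdense : Dense (A.domain : Set H)) (hsa : A.adjoint = A)
    (V B : H →L[ℂ] H) (hViso : ∀ x : H, ‖V x‖ = ‖x‖)
    (hcomm : ∀ φ ψ : A.domain,
      ⟪A φ, V (ψ : H)⟫ - ⟪(φ : H), V (A ψ)⟫ = ⟪(φ : H), B (ψ : H)⟫)
    (ψ : A.domain) :
    ∀ n : ℕ, ∃ h : (V ^ n) (ψ : H) ∈ A.domain,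
      ‖A ⟨(V ^ n) (ψ : H), h⟩ - (V ^ n) (A ψ)‖ ≤ n * ‖B‖ * ‖(ψ : H)‖ := by
  intro n
  induction n with
  | zero =>
      have h0 : (V ^ 0) (ψ : H) = (ψ : H) := by simp
      refine ⟨h0 ▸ ψ.2, ?_⟩
      have heq : (⟨(V ^ 0) (ψ : H), h0 ▸ ψ.2⟩ : A.domain) = ψ := Subtype.ext h0
      rw [heq]
      simp
  | succ n ih =>
      obtain ⟨h, hb⟩ := ih
      obtain ⟨h', he⟩ := stmt8_step A hdense hsa V B hcomm ⟨(V ^ n) (ψ : H), h⟩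
      have hcast : (V ^ (n + 1)) (ψ : H) = V ((V ^ n) (ψ : H)) := by
        rw [pow_succ', ContinuousLinearMap.mul_apply]
      have hmem : (V ^ (n + 1)) (ψ : H) ∈ A.domain := hcast ▸ h'
      refine ⟨hmem, ?_⟩
      have hA : A ⟨(V ^ (n + 1)) (ψ : H), hmem⟩
          = V (A ⟨(V ^ n) (ψ : H), h⟩) + B ((V ^ n) (ψ : H)) := by
        rw [← he]
        congr 1
        exact Subtype.ext hcast
      rw [hA]
      have hdiff : V (A ⟨(V ^ n) (ψ : H), h⟩) + B ((V ^ n) (ψ : H)) - (V ^ (n + 1)) (A ψ)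
          = V (A ⟨(V ^ n) (ψ : H), h⟩ - (V ^ n) (A ψ)) + B ((V ^ n) (ψ : H)) := by
        rw [map_sub, pow_succ', ContinuousLinearMap.mul_apply]; abel
      rw [hdiff]
      calc ‖V (A ⟨(V ^ n) (ψ : H), h⟩ - (V ^ n) (A ψ)) + B ((V ^ n) (ψ : H))‖
          ≤ ‖V (A ⟨(V ^ n) (ψ : H), h⟩ - (V ^ n) (A ψ))‖ + ‖B ((V ^ n) (ψ : H))‖ :=
            norm_add_le _ _
        _ ≤ n * ‖B‖ * ‖(ψ : H)‖ + ‖B‖ * ‖(ψ : H)‖ := by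
            gcongr
            · rw [hViso]; exact hb
            · calc ‖B ((V ^ n) (ψ : H))‖ ≤ ‖B‖ * ‖(V ^ n) (ψ : H)‖ := B.le_opNorm _
                _ = ‖B‖ * ‖(ψ : H)‖ := by rw [stmt8_pow_norm V hViso]
        _ = (n + 1 : ℕ) * ‖B‖ * ‖(ψ : H)‖ := by push_cast; ring

/-- limsup estimate. -/
lemma stmt8_limsup {u : ℕ → ℝ} {c d : ℝ} (hc : 0 ≤ c) (hd : 0 ≤ d)
    (hu0 : ∀ n, 0 ≤ u n) (hu : ∀ n : ℕ, u n ≤ c + n * d) :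
    Filter.limsup (fun n : ℕ => (n : ℝ)⁻¹ * u n) Filter.atTop ≤ d := by
  set v : ℕ → ℝ := fun n => (n : ℝ)⁻¹ * c + d with hv
  have hle : ∀ n : ℕ, (n : ℝ)⁻¹ * u n ≤ v n := by
    intro n
    rcases Nat.eq_zero_or_pos n with rfl | hn
    · simpa [hv] using hd
    have hn' : (0 : ℝ) < n := by exact_mod_cast hn
    calc (n : ℝ)⁻¹ * u n ≤ (n : ℝ)⁻¹ * (c + n * d) := by
          gcongr; exact hu n
      _ = v n := by simp only [hv]; field_simp
  have hvt : Filter.Tendsto v Filter.atTop (nhds d) := by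
    have h0 : Filter.Tendsto (fun n : ℕ => (n : ℝ)⁻¹ * c) Filter.atTop (nhds 0) := by
      simpa using (tendsto_inv_atTop_nhds_zero_nat.mul_const c)
    simpa using h0.add tendsto_const_nhds
  calc Filter.limsup (fun n : ℕ => (n : ℝ)⁻¹ * u n) Filter.atTop
      ≤ Filter.limsup v Filter.atTop := by
        refine Filter.limsup_le_limsup (Filter.Eventually.of_forall hle) ?_ ?_
        · exact Filter.isCoboundedUnder_le_of_le Filter.atTop
            (fun n => mul_nonneg (by positivity) (hu0 n))
        · exact hvt.isBoundedUnder_le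
    _ = d := hvt.limsup_eq

lemma stmt8_main (A : H →ₗ.[ℂ] H) (hdense : Dense (A.domain : Set H)) (hsa : A.adjoint = A)
    (V B : H →L[ℂ] H) (hViso : ∀ x : H, ‖V x‖ = ‖x‖)
    (hcomm : ∀ φ ψ : A.domain,
      ⟪A φ, V (ψ : H)⟫ - ⟪(φ : H), V (A ψ)⟫ = ⟪(φ : H), B (ψ : H)⟫)
    (φ : H) (ψ : A.domain) (h : ∀ n : ℕ, (V ^ n) (ψ : H) ∈ A.domain) :
    Filter.limsup
        (fun n : ℕ => (n : ℝ)⁻¹ * ‖⟪(V ^ n) φ, A ⟨(V ^ n) (ψ : H), h n⟩⟫‖)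
        Filter.atTop ≤ ‖B‖ * ‖φ‖ * ‖(ψ : H)‖ := by
  have key : ∀ n : ℕ, ‖⟪(V ^ n) φ, A ⟨(V ^ n) (ψ : H), h n⟩⟫‖
      ≤ ‖φ‖ * ‖A ψ‖ + n * (‖B‖ * ‖φ‖ * ‖(ψ : H)‖) := by
    intro n
    obtain ⟨h', hb⟩ := stmt8_pow A hdense hsa V B hViso hcomm ψ n
    set z := A ⟨(V ^ n) (ψ : H), h n⟩ with hz
    have hb' : ‖z - (V ^ n) (A ψ)‖ ≤ n * ‖B‖ * ‖(ψ : H)‖ := hb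
    have hsplit : ⟪(V ^ n) φ, z⟫
        = ⟪(V ^ n) φ, z - (V ^ n) (A ψ)⟫ + ⟪(V ^ n) φ, (V ^ n) (A ψ)⟫ := by
      rw [← inner_add_right, sub_add_cancel]
    calc ‖⟪(V ^ n) φ, z⟫‖
        ≤ ‖⟪(V ^ n) φ, z - (V ^ n) (A ψ)⟫‖ + ‖⟪(V ^ n) φ, (V ^ n) (A ψ)⟫‖ := by
          rw [hsplit]; exact norm_add_le _ _
      _ ≤ ‖(V ^ n) φ‖ * ‖z - (V ^ n) (A ψ)‖ + ‖(V ^ n) φ‖ * ‖(V ^ n) (A ψ)‖ :=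
          add_le_add (norm_inner_le_norm _ _) (norm_inner_le_norm _ _)
      _ = ‖φ‖ * ‖z - (V ^ n) (A ψ)‖ + ‖φ‖ * ‖A ψ‖ := by
          rw [stmt8_pow_norm V hViso, stmt8_pow_norm V hViso]
      _ ≤ ‖φ‖ * (n * ‖B‖ * ‖(ψ : H)‖) + ‖φ‖ * ‖A ψ‖ := by gcongr
      _ = ‖φ‖ * ‖A ψ‖ + n * (‖B‖ * ‖φ‖ * ‖(ψ : H)‖) := by ring
  exact stmt8_limsup (by positivity) (by positivity) (fun n => norm_nonneg _) key

end Stmt8Aux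

/-- Proposition 5.4 ("laurent-0"): if a unitary `U` is of class `C¹(A)` with commutator
`ad_A U`, then the powers `U^n` and `U^{*n}` preserve `D(A)` (so `U^n ψ ∈ D(A)` for every
`n ∈ ℤ` and `ψ ∈ D(A)`), and for every `(φ, ψ) ∈ H × D(A)` one has
`limsup_{n→∞} n⁻¹ |⟨U^n φ, A U^n ψ⟩| ≤ ‖ad_A U‖ ‖φ‖ ‖ψ‖`, and likewise with `U*`. -/
theorem stmt8
    {H : Type*} [NormedAddCommGroup H] [InnerProductSpace ℂ H] [CompleteSpace H]
    -- A self-adjoint (densely defined) operator on H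
    (A : H →ₗ.[ℂ] H) (hdense : Dense (A.domain : Set H)) (hsa : A.adjoint = A)
    -- U unitary of class C¹(A) with commutator adU
    (U adU : H →L[ℂ] H) (hU : U ∈ unitary (H →L[ℂ] H))
    (hC1 : ∀ φ ψ : A.domain,
      ⟪A φ, U (ψ : H)⟫ - ⟪(φ : H), U (A ψ)⟫ = ⟪(φ : H), adU (ψ : H)⟫) :
    ∃ hm : ∀ (n : ℕ) (x : H), x ∈ A.domain →
        ((U ^ n) x ∈ A.domain ∧ ((star U) ^ n) x ∈ A.domain),
      ∀ (φ : H) (ψ : A.domain),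
        Filter.limsup
            (fun n : ℕ => (n : ℝ)⁻¹ *
              ‖⟪(U ^ n) φ, A ⟨(U ^ n) (ψ : H), (hm n ψ ψ.2).1⟩⟫‖)
            Filter.atTop ≤ ‖adU‖ * ‖φ‖ * ‖(ψ : H)‖ ∧
        Filter.limsup
            (fun n : ℕ => (n : ℝ)⁻¹ *
              ‖⟪((star U) ^ n) φ, A ⟨((star U) ^ n) (ψ : H), (hm n ψ ψ.2).2⟩⟫‖)
            Filter.atTop ≤ ‖adU‖ * ‖φ‖ * ‖(ψ : H)‖ := by
  have hUiso : ∀ x : H, ‖U x‖ = ‖x‖ := fun x =>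
    ContinuousLinearMap.norm_map_of_mem_unitary hU x
  have hUsiso : ∀ x : H, ‖(star U) x‖ = ‖x‖ := fun x =>
    ContinuousLinearMap.norm_map_of_mem_unitary (Unitary.star_mem hU) x
  -- commutator of star U
  set B' : H →L[ℂ] H := -(star adU) with hB'
  have hnB' : ‖B'‖ = ‖adU‖ := by rw [hB', norm_neg, norm_star]
  have hC1' : ∀ φ ψ : A.domain,
      ⟪A φ, (star U) (ψ : H)⟫ - ⟪(φ : H), (star U) (A ψ)⟫ = ⟪(φ : H), B' (ψ : H)⟫ := by
    intro φ ψ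
    have h1 := hC1 ψ φ
    have h2 : ⟪U (φ : H), A ψ⟫ - ⟪U (A φ), (ψ : H)⟫ = ⟪adU (φ : H), (ψ : H)⟫ := by
      have := congrArg (starRingEnd ℂ) h1
      simpa only [map_sub, inner_conj_symm] using this
    have e1 : ⟪A φ, (star U) (ψ : H)⟫ = ⟪U (A φ), (ψ : H)⟫ := by
      rw [ContinuousLinearMap.star_eq_adjoint, ContinuousLinearMap.adjoint_inner_right]
    have e2 : ⟪(φ : H), (star U) (A ψ)⟫ = ⟪U (φ : H), A ψ⟫ := by
      rw [ContinuousLinearMap.star_eq_adjoint, ContinuousLinearMap.adjoint_inner_right]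
    have e3 : ⟪adU (φ : H), (ψ : H)⟫ = ⟪(φ : H), (star adU) (ψ : H)⟫ := by
      rw [ContinuousLinearMap.star_eq_adjoint, ContinuousLinearMap.adjoint_inner_right]
    have e4 : ⟪(φ : H), B' (ψ : H)⟫ = -⟪(φ : H), (star adU) (ψ : H)⟫ := by
      rw [hB']; simp [inner_neg_right]
    rw [e1, e2, e4, ← e3]
    linear_combination -h2
  have hmem1 : ∀ (n : ℕ) (ψ : A.domain), (U ^ n) (ψ : H) ∈ A.domain :=
    fun n ψ => (stmt8_pow A hdense hsa U adU hUiso hC1 ψ n).choose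
  have hmem2 : ∀ (n : ℕ) (ψ : A.domain), ((star U) ^ n) (ψ : H) ∈ A.domain :=
    fun n ψ => (stmt8_pow A hdense hsa (star U) B' hUsiso hC1' ψ n).choose
  refine ⟨fun n x hx => ⟨hmem1 n ⟨x, hx⟩, hmem2 n ⟨x, hx⟩⟩, fun φ ψ => ⟨?_, ?_⟩⟩
  · exact stmt8_main A hdense hsa U adU hUiso hC1 φ ψ (fun n => hmem1 n ψ)
  · have := stmt8_main A hdense hsa (star U) B' hUsiso hC1' φ ψ (fun n => hmem2 n ψ)
    rwa [hnB'] at this
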